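/- For every dimension d ≥ 2 the expected log progress of the hit-and-run algorithm on the sphere is at most 1/d; explicitly, (1/(2·W_{d−2})) · ∫₀^{π/2} (−log(sin θ)) · sin^{d−2}(θ) dθ ≤ 1/d. -/

import Mathlib

open MeasureTheory Real intervalIntegral

/-- The Wallis integral `W_n = ∫₀^{π/2} sin^n θ dθ`. -/
noncomputable def wallis (n : ℕ) : ℝ := ∫ θ in (0:ℝ)..(Real.pi / 2), Real.sin θ ^ n

namespace HitAndRunAux

/-- Dominating function: `log (π/2) - log θ`. -/
noncomputable def dom (θ : ℝ) : ℝ := Real.log (Real.pi / 2) - Real.log θ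

/-- Antiderivative of `dom`. -/
noncomputable def domAnti (θ : ℝ) : ℝ := θ * Real.log (Real.pi / 2) + θ - θ * Real.log θ

lemma domAnti_continuousOn : ContinuousOn domAnti (Set.Icc (0:ℝ) (Real.pi/2)) := by
  apply Continuous.continuousOn
  exact ((continuous_id.mul continuous_const).add continuous_id).sub Real.continuous_mul_log

lemma domAnti_hasDerivAt {θ : ℝ} (hθ : θ ≠ 0) : HasDerivAt domAnti (dom θ) θ := by
  have h1 : HasDerivAt (fun t : ℝ => t * Real.log (Real.pi / 2) + t)
      (Real.log (Real.pi / 2) + 1) θ := by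
    exact (((hasDerivAt_id' θ).mul_const (Real.log (Real.pi / 2))).add (hasDerivAt_id' θ)).congr_deriv (by ring)
  have h2 := Real.hasDerivAt_mul_log hθ
  have := h1.sub h2
  refine HasDerivAt.congr_deriv this ?_
  unfold dom; ring

lemma dom_nonneg {θ : ℝ} (h0 : 0 < θ) (h1 : θ ≤ Real.pi / 2) : 0 ≤ dom θ :=
  sub_nonneg.2 (Real.log_le_log h0 h1)

lemma dom_intervalIntegrable : IntervalIntegrable dom volume 0 (Real.pi / 2) := by
  apply intervalIntegrable_deriv_of_nonneg (g := domAnti)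
  · rw [Set.uIcc_of_le (by positivity : (0:ℝ) ≤ Real.pi / 2)]
    exact domAnti_continuousOn
  · intro x hx
    rw [min_eq_left (by positivity : (0:ℝ) ≤ Real.pi / 2),
      max_eq_right (by positivity : (0:ℝ) ≤ Real.pi / 2)] at hx
    exact domAnti_hasDerivAt (ne_of_gt hx.1)
  · intro x hx
    rw [min_eq_left (by positivity : (0:ℝ) ≤ Real.pi / 2),
      max_eq_right (by positivity : (0:ℝ) ≤ Real.pi / 2)] at hx
    exact dom_nonneg hx.1 hx.2.le

lemma dom_integral : ∫ θ in (0:ℝ)..(Real.pi/2), dom θ = Real.pi / 2 := by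
  have := intervalIntegral.integral_eq_sub_of_hasDeriv_right_of_le
    (by positivity : (0:ℝ) ≤ Real.pi / 2) domAnti_continuousOn
    (fun x hx => (domAnti_hasDerivAt (ne_of_gt hx.1)).hasDerivWithinAt)
    dom_intervalIntegrable
  rw [this]
  unfold domAnti
  simp

lemma log_pi_div_two_nonneg : 0 ≤ Real.log (Real.pi / 2) := by
  apply Real.log_nonneg
  nlinarith [Real.pi_gt_three]

/-- Pointwise bound `-log (sin θ) ≤ dom θ` on `[0, π/2]`. -/
lemma neg_log_sin_le_dom {θ : ℝ} (h0 : 0 ≤ θ) (h1 : θ ≤ Real.pi / 2) :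
    -Real.log (Real.sin θ) ≤ dom θ := by
  rcases eq_or_lt_of_le h0 with rfl | hpos
  · simp [dom, log_pi_div_two_nonneg]
  · have hsin : 2 / Real.pi * θ ≤ Real.sin θ := Real.mul_le_sin h0 h1
    have hpi : (0:ℝ) < Real.pi := Real.pi_pos
    have h2 : (0:ℝ) < 2 / Real.pi * θ := by positivity
    have hlog : Real.log (2 / Real.pi * θ) ≤ Real.log (Real.sin θ) :=
      Real.log_le_log h2 hsin
    have heq : Real.log (2 / Real.pi * θ) = -Real.log (Real.pi / 2) + Real.log θ := by
      rw [Real.log_mul (by positivity) (ne_of_gt hpos)]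
      have : (2:ℝ) / Real.pi = (Real.pi / 2)⁻¹ := by field_simp
      rw [this, Real.log_inv]
    unfold dom
    rw [heq] at hlog
    linarith

/-- The integrand is interval integrable. -/
lemma integrand_intervalIntegrable (n : ℕ) :
    IntervalIntegrable (fun θ => (-Real.log (Real.sin θ)) * Real.sin θ ^ n)
      volume 0 (Real.pi / 2) := by
  apply dom_intervalIntegrable.mono_fun'
  · apply Measurable.aestronglyMeasurable
    exact ((Real.measurable_log.comp Real.measurable_sin).neg).mul
      ((Real.measurable_sin).pow_const n)
  · rw [Filter.EventuallyLE, ae_restrict_iff' measurableSet_uIoc]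
    apply Filter.Eventually.of_forall
    intro θ hθ
    rw [Set.uIoc_of_le (by positivity : (0:ℝ) ≤ Real.pi / 2)] at hθ
    have hs0 : 0 < Real.sin θ := Real.sin_pos_of_pos_of_lt_pi hθ.1
      (lt_of_le_of_lt hθ.2 (by nlinarith [Real.pi_pos]))
    have hs1 : Real.sin θ ≤ 1 := Real.sin_le_one θ
    have hlog : Real.log (Real.sin θ) ≤ 0 := Real.log_nonpos hs0.le hs1
    have habs : ‖(-Real.log (Real.sin θ)) * Real.sin θ ^ n‖ ≤ -Real.log (Real.sin θ) := by
      rw [Real.norm_eq_abs, abs_mul, abs_of_nonneg (by linarith : (0:ℝ) ≤ -Real.log (Real.sin θ)),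
        abs_of_nonneg (by positivity : (0:ℝ) ≤ Real.sin θ ^ n)]
      nlinarith [pow_le_one₀ hs0.le hs1 (n := n), pow_nonneg hs0.le n]
    exact habs.trans (neg_log_sin_le_dom hθ.1.le hθ.2)

lemma wallis_intervalIntegrable (n : ℕ) :
    IntervalIntegrable (fun θ => Real.sin θ ^ n) volume 0 (Real.pi / 2) :=
  (Real.continuous_sin.pow n).intervalIntegrable _ _

lemma wallis_pos (n : ℕ) : 0 < wallis n := by
  apply intervalIntegral.intervalIntegral_pos_of_pos_on (wallis_intervalIntegrable n)
  · intro x hx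
    exact pow_pos (Real.sin_pos_of_pos_of_lt_pi hx.1
      (lt_of_lt_of_le hx.2 (by nlinarith [Real.pi_pos]))) n
  · positivity

lemma wallis_succ_le (n : ℕ) : wallis (n + 1) ≤ wallis n := by
  apply intervalIntegral.integral_mono_on (by positivity)
    (wallis_intervalIntegrable (n+1)) (wallis_intervalIntegrable n)
  intro x hx
  exact pow_le_pow_of_le_one (Real.sin_nonneg_of_nonneg_of_le_pi hx.1
    (le_trans hx.2 (by nlinarith [Real.pi_pos]))) (Real.sin_le_one x) (Nat.le_succ n)

lemma wallis_zero : wallis 0 = Real.pi / 2 := by simp [wallis]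

lemma wallis_one : wallis 1 = 1 := by simp [wallis]

lemma wallis_rec (n : ℕ) : wallis (n + 2) = (n + 1) / (n + 2) * wallis n := by
  unfold wallis
  rw [integral_sin_pow n]
  simp

/-- Pointwise bound for `n ≥ 1`. -/
lemma pointwise_step {s : ℝ} (h0 : 0 ≤ s) (h1 : s ≤ 1) (n : ℕ) :
    (-Real.log s) * s ^ (n + 1) ≤ s ^ n - s ^ (n + 1) := by
  rcases eq_or_lt_of_le h0 with rfl | hpos
  · simp only [Real.log_zero, neg_zero, zero_mul, zero_pow (Nat.succ_ne_zero n), sub_zero]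
    positivity
  · have hlog : Real.log s⁻¹ ≤ s⁻¹ - 1 := Real.log_le_sub_one_of_pos (by positivity)
    rw [Real.log_inv] at hlog
    have h2 : (-Real.log s) * s ^ (n + 1) ≤ (s⁻¹ - 1) * s ^ (n + 1) :=
      mul_le_mul_of_nonneg_right (by linarith) (by positivity)
    have h3 : (s⁻¹ - 1) * s ^ (n + 1) = s ^ n - s ^ (n + 1) := by
      rw [pow_succ]
      field_simp
    linarith [h2, h3.le]

lemma key_step (n : ℕ) :
    (∫ θ in (0:ℝ)..(Real.pi / 2), (-Real.log (Real.sin θ)) * Real.sin θ ^ (n + 1)) ≤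
      wallis n - wallis (n + 1) := by
  have h := intervalIntegral.integral_mono_on (by positivity : (0:ℝ) ≤ Real.pi / 2)
    (integrand_intervalIntegrable (n + 1))
    ((wallis_intervalIntegrable n).sub (wallis_intervalIntegrable (n + 1)))
    (fun x hx => pointwise_step
      (Real.sin_nonneg_of_nonneg_of_le_pi hx.1 (le_trans hx.2 (by nlinarith [Real.pi_pos])))
      (Real.sin_le_one x) n)
  rwa [intervalIntegral.integral_sub (wallis_intervalIntegrable n)
    (wallis_intervalIntegrable (n + 1))] at h

/-- The key estimate: `∫ (-log sin θ) sin^n θ ≤ (2/(n+2)) W_n`. -/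
lemma key (n : ℕ) :
    (∫ θ in (0:ℝ)..(Real.pi / 2), (-Real.log (Real.sin θ)) * Real.sin θ ^ n) ≤
      2 / (n + 2) * wallis n := by
  match n with
  | 0 =>
    have h := intervalIntegral.integral_mono_on (by positivity : (0:ℝ) ≤ Real.pi / 2)
      (integrand_intervalIntegrable 0) dom_intervalIntegrable
      (fun x hx => by simpa using neg_log_sin_le_dom hx.1 hx.2)
    rw [dom_integral] at h
    calc (∫ θ in (0:ℝ)..(Real.pi / 2), (-Real.log (Real.sin θ)) * Real.sin θ ^ 0)
        ≤ Real.pi / 2 := h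
      _ = 2 / ((0:ℕ) + 2) * wallis 0 := by rw [wallis_zero]; norm_num
  | 1 =>
    have h := key_step 0
    rw [wallis_zero, wallis_one] at h
    rw [wallis_one]
    have hpi : Real.pi < 3.15 := Real.pi_lt_d2
    norm_num at h ⊢
    linarith
  | (k + 2) =>
    have h := key_step (k + 1)
    have hrec : wallis (k + 3) = (k + 2) / (k + 3) * wallis (k + 1) := by
      have := wallis_rec (k + 1)
      convert this using 3 <;> push_cast <;> ring
    have hle : wallis (k + 3) ≤ wallis (k + 2) := wallis_succ_le (k + 2)
    have hW2 : 0 < wallis (k + 2) := wallis_pos (k + 2)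
    have hW1 : 0 < wallis (k + 1) := wallis_pos (k + 1)
    set c : ℝ := (k : ℝ) with hc
    have hc0 : 0 ≤ c := Nat.cast_nonneg k
    -- from recursion: (c+2) * W1 ≤ (c+3) * W2
    have h4 : (c + 2) * wallis (k + 1) ≤ (c + 3) * wallis (k + 2) := by
      have : (c + 3) * wallis (k + 3) = (c + 2) * wallis (k + 1) := by
        rw [hrec]; field_simp
      nlinarith [hle]
    have hcast : ((k : ℝ) + 2 + 2) = ((k + 2 : ℕ) : ℝ) + 2 := by push_cast; ring
    have hgoal : wallis (k + 1) - wallis (k + 2) ≤ 2 / (c + 4) * wallis (k + 2) := by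
      rw [div_mul_eq_mul_div, le_div_iff₀ (by positivity : (0:ℝ) < c + 4)]
      nlinarith [mul_le_mul_of_nonneg_right h4 (show (0:ℝ) ≤ c + 4 by positivity),
        mul_nonneg hc0 hW2.le]
    calc (∫ θ in (0:ℝ)..(Real.pi / 2), (-Real.log (Real.sin θ)) * Real.sin θ ^ (k + 2))
        ≤ wallis (k + 1) - wallis (k + 2) := h
      _ ≤ 2 / (c + 4) * wallis (k + 2) := hgoal
      _ = 2 / (((k + 2 : ℕ) : ℝ) + 2) * wallis (k + 2) := by
          rw [hc]; push_cast; ring_nf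

end HitAndRunAux

/-- The expected log progress of the hit-and-run algorithm on the sphere in dimension
`d ≥ 2` is at most `1/d`. -/
theorem hit_and_run_progress (d : ℕ) (hd : 2 ≤ d) :
    (1 / (2 * wallis (d - 2))) *
      ∫ θ in (0:ℝ)..(Real.pi / 2), (-Real.log (Real.sin θ)) * Real.sin θ ^ (d - 2) ≤
    1 / d := by
  have hW : 0 < wallis (d - 2) := HitAndRunAux.wallis_pos (d - 2)
  have hkey := HitAndRunAux.key (d - 2)
  have hd2 : ((d - 2 : ℕ) : ℝ) + 2 = (d : ℝ) := by
    have : d - 2 + 2 = d := Nat.sub_add_cancel hd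
    exact_mod_cast congrArg (Nat.cast : ℕ → ℝ) this
  rw [hd2] at hkey
  have hdpos : (0:ℝ) < d := by
    have : (2:ℝ) ≤ d := by exact_mod_cast hd
    linarith
  calc (1 / (2 * wallis (d - 2))) *
        ∫ θ in (0:ℝ)..(Real.pi / 2), (-Real.log (Real.sin θ)) * Real.sin θ ^ (d - 2)
      ≤ (1 / (2 * wallis (d - 2))) * (2 / d * wallis (d - 2)) :=
        mul_le_mul_of_nonneg_left hkey (by positivity)
    _ = 1 / d := by field_simp
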